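/- Let T be a two-dimensional symplectic triple system over a field k of characteristic 3. Then either: (i) there is a basis {a,b} of T with (a|b) = 1 and a scalar α ∈ k such that [aaa] = αb and all other triple products of basis elements are 0; or (ii) there is a basis {a,b} with (a|b) = 1 and a scalar 0 ≠ ε ∈ k such that [aaa] = 0 = [bbb], [aab] = [aba] = [baa] = εa, and [abb] = [bab] = [bba] = −εb. -/

import Mathlib

/-- A symplectic triple system: a finite-dimensional vector space `T` over a field `k`
with a nonzero alternating bilinear form `B` and a trilinear product `tp` satisfying
identities (a)–(d). -/
def IsSympTripleSystem (k : Type*) {T : Type*} [Field k] [AddCommGroup T] [Module k T]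
    (tp : T →ₗ[k] T →ₗ[k] T →ₗ[k] T) (B : T →ₗ[k] T →ₗ[k] k) : Prop :=
  (∀ x : T, B x x = 0) ∧ B ≠ 0 ∧
  (∀ x y z : T, tp x y z = tp y x z) ∧
  (∀ x y z : T, tp x y z - tp x z y = B x z • y - B x y • z + (2 * B y z) • x) ∧
  (∀ x y u v w : T, tp x y (tp u v w) =
      tp (tp x y u) v w + tp u (tp x y v) w + tp u v (tp x y w)) ∧
  (∀ x y u v : T, B (tp x y u) v + B u (tp x y v) = 0)

set_option maxHeartbeats 1600000 in
/-- Classification of the two-dimensional symplectic triple systems over a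
field of characteristic 3: either (i) there is a symplectic basis `{a, b}` and `α ∈ k` with
`[aaa] = α • b` and all other products of basis elements zero, or (ii) there is a symplectic
basis `{a, b}` and `0 ≠ ε ∈ k` with `[aaa] = 0 = [bbb]`, `[aab] = [aba] = [baa] = ε • a`,
`[abb] = [bab] = [bba] = -(ε • b)`. -/
theorem two_dimensional_STS_char_three (k T : Type*) [Field k] [AddCommGroup T] [Module k T]
    [FiniteDimensional k T] (hchar : ringChar k = 3)
    (hdim : Module.finrank k T = 2)
    (tp : T →ₗ[k] T →ₗ[k] T →ₗ[k] T) (B : T →ₗ[k] T →ₗ[k] k)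
    (hsts : IsSympTripleSystem k tp B) :
    (∃ a b : T, ∃ α : k, Submodule.span k {a, b} = ⊤ ∧ B a b = 1 ∧
       tp a a a = α • b ∧ tp a a b = 0 ∧ tp a b a = 0 ∧ tp b a a = 0 ∧
       tp a b b = 0 ∧ tp b a b = 0 ∧ tp b b a = 0 ∧ tp b b b = 0) ∨
    (∃ a b : T, ∃ ε : k, Submodule.span k {a, b} = ⊤ ∧ B a b = 1 ∧ ε ≠ 0 ∧
       tp a a a = 0 ∧ tp b b b = 0 ∧
       tp a a b = ε • a ∧ tp a b a = ε • a ∧ tp b a a = ε • a ∧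
       tp a b b = -(ε • b) ∧ tp b a b = -(ε • b) ∧ tp b b a = -(ε • b)) := by
  obtain ⟨halt, hBne, hsym, hskew, hder, hinv⟩ := hsts
  haveI : CharP k 3 := hchar ▸ ringChar.charP k
  have h3 : (3 : k) = 0 := by exact_mod_cast CharP.cast_eq_zero k 3
  have hBanti : ∀ x y : T, B x y = -B y x := by
    intro x y
    have h := halt (x + y)
    simp only [map_add, LinearMap.add_apply, halt x, halt y, zero_add, add_zero] at h
    linear_combination h
  obtain ⟨x, y, hxy⟩ : ∃ x y : T, B x y ≠ 0 := by
    by_contra h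
    push_neg at h
    exact hBne (by ext x y; simp [h x y])
  set a := x with ha
  set b := (B x y)⁻¹ • y with hb
  have hab : B a b = 1 := by
    simp [hb, map_smul, smul_eq_mul, inv_mul_cancel₀ hxy]; exact inv_mul_cancel₀ hxy
  have hba : B b a = -1 := by rw [hBanti, hab]
  have haa : B a a = 0 := halt a
  have hbb : B b b = 0 := halt b
  clear hb ha
  clear_value a b
  have hspan : Submodule.span k {a, b} = ⊤ := by
    have hli : LinearIndependent k ![a, b] := by
      rw [LinearIndependent.pair_iff]
      intro s t hst
      constructor
      · have := congrArg (fun u => B u b) hst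
        simpa [map_add, map_smul, hab, hbb, smul_eq_mul] using this
      · have := congrArg (fun u => B u a) hst
        simpa [map_add, map_smul, hba, haa, smul_eq_mul] using this
    have := hli.span_eq_top_of_card_eq_finrank (by simp [hdim])
    have hrange : Set.range ![a, b] = {a, b} := by
      ext u
      simp [Matrix.range_cons, Matrix.range_empty, or_comm]
    rwa [hrange] at this
  have hrep : ∀ u : T, u = B u b • a - B u a • b := by
    intro u
    have hu : u ∈ Submodule.span k {a, b} := hspan ▸ Submodule.mem_top
    obtain ⟨s, t, hst⟩ := Submodule.mem_span_pair.mp hu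
    rw [← hst]
    have h1 : B (s • a + t • b) b = s := by simp [map_add, map_smul, hab, hbb, smul_eq_mul]
    have h2 : B (s • a + t • b) a = -t := by simp [map_add, map_smul, hba, haa, smul_eq_mul]
    rw [h1, h2]
    module

  -- symmetry of the triple product among basis elements
  have hF : ∀ x y u w : T, B (tp x y u) w = B (tp x y w) u := by
    intro x y u w
    have h := hinv x y u w
    have h2 := hBanti u (tp x y w)
    linear_combination h - h2
  have haba : tp a b a = tp a a b := by
    have h := hskew a a b
    rw [hab, haa] at h
    have hv : (1:k) • a - (0:k) • b + (2 * 1 : k) • a = ((1:k) + 2 * 1) • a := by module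
    rw [hv] at h
    have hz : (1:k) + 2 * 1 = 0 := by linear_combination h3
    rw [hz, zero_smul] at h
    exact (sub_eq_zero.mp h).symm
  have hbab : tp b a b = tp a b b := hsym b a b
  have hbaa : tp b a a = tp a b a := hsym b a a
  have hbba : tp b b a = tp a b b := by
    have h := hskew b b a
    rw [hba, hbb] at h
    have hv : (-1:k) • b - (0:k) • a + (2 * (-1) : k) • b = ((-1:k) + 2 * (-1)) • b := by module
    rw [hv] at h
    have hz : (-1:k) + 2 * (-1) = 0 := by linear_combination -h3
    rw [hz, zero_smul] at h
    rw [sub_eq_zero.mp h, hbab]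
  -- coordinates of the triple products
  obtain ⟨p, q, Paaa⟩ : ∃ p q : k, tp a a a = p • a + q • b :=
    ⟨_, _, by conv_lhs => rw [hrep (tp a a a)]; rw [sub_eq_add_neg, ← neg_smul]⟩
  have hBaaab : B (tp a a a) b = p := by
    rw [Paaa]; simp [map_add, map_smul, hab, hbb, smul_eq_mul]
  obtain ⟨r, Paab⟩ : ∃ r : k, tp a a b = r • a + (-p) • b := by
    refine ⟨B (tp a a b) b, ?_⟩
    have h1 : B (tp a a b) a = p := by rw [hF a a b a, hBaaab]
    conv_lhs => rw [hrep (tp a a b), h1]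
    module
  have hBaabb : B (tp a a b) b = r := by
    rw [Paab]; simp [map_add, map_smul, hab, hbb, smul_eq_mul]
  have Paba : tp a b a = r • a + (-p) • b := by rw [haba, Paab]
  have Pbaa : tp b a a = r • a + (-p) • b := by rw [hbaa, Paba]
  obtain ⟨t, Pabb⟩ : ∃ t : k, tp a b b = t • a + (-r) • b := by
    refine ⟨B (tp a b b) b, ?_⟩
    have h1 : B (tp a b b) a = r := by rw [hF a b b a, haba, hBaabb]
    conv_lhs => rw [hrep (tp a b b), h1]
    module
  have hBabbb : B (tp a b b) b = t := by
    rw [Pabb]; simp [map_add, map_smul, hab, hbb, smul_eq_mul]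
  have Pbab : tp b a b = t • a + (-r) • b := by rw [hbab, Pabb]
  have Pbba : tp b b a = t • a + (-r) • b := by rw [hbba, Pabb]
  obtain ⟨v, Pbbb⟩ : ∃ v : k, tp b b b = v • a + (-t) • b := by
    refine ⟨B (tp b b b) b, ?_⟩
    have h1 : B (tp b b b) a = t := by rw [hF b b b a, hbba, hBabbb]
    conv_lhs => rw [hrep (tp b b b), h1]
    module
  -- scalar constraints from the derivation identity
  have K1 := congrArg (fun u => B u b) (hder a a a a a)
  simp only [Paaa, Paab, Paba, Pbaa, Pabb, Pbab, Pbba, Pbbb, map_add, map_smul,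
    LinearMap.add_apply, LinearMap.smul_apply, smul_eq_mul, hab, hba, haa, hbb,
    mul_one, mul_zero, mul_neg, one_mul, zero_mul, add_zero, zero_add, neg_neg, neg_zero] at K1
  ring_nf at K1
  have K2 := congrArg (fun u => B u a) (hder b b b b b)
  simp only [Paaa, Paab, Paba, Pbaa, Pabb, Pbab, Pbba, Pbbb, map_add, map_smul,
    LinearMap.add_apply, LinearMap.smul_apply, smul_eq_mul, hab, hba, haa, hbb,
    mul_one, mul_zero, mul_neg, one_mul, zero_mul, add_zero, zero_add, neg_neg, neg_zero] at K2
  ring_nf at K2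
  have K3a := congrArg (fun u => B u a) (hder a a b b a)
  simp only [Paaa, Paab, Paba, Pbaa, Pabb, Pbab, Pbba, Pbbb, map_add, map_smul,
    LinearMap.add_apply, LinearMap.smul_apply, smul_eq_mul, hab, hba, haa, hbb,
    mul_one, mul_zero, mul_neg, one_mul, zero_mul, add_zero, zero_add, neg_neg, neg_zero] at K3a
  ring_nf at K3a
  have K3b := congrArg (fun u => B u b) (hder a a b b a)
  simp only [Paaa, Paab, Paba, Pbaa, Pabb, Pbab, Pbba, Pbbb, map_add, map_smul,
    LinearMap.add_apply, LinearMap.smul_apply, smul_eq_mul, hab, hba, haa, hbb,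
    mul_one, mul_zero, mul_neg, one_mul, zero_mul, add_zero, zero_add, neg_neg, neg_zero] at K3b
  ring_nf at K3b
  have K4 := congrArg (fun u => B u b) (hder b b a a b)
  simp only [Paaa, Paab, Paba, Pbaa, Pabb, Pbab, Pbba, Pbbb, map_add, map_smul,
    LinearMap.add_apply, LinearMap.smul_apply, smul_eq_mul, hab, hba, haa, hbb,
    mul_one, mul_zero, mul_neg, one_mul, zero_mul, add_zero, zero_add, neg_neg, neg_zero] at K4
  ring_nf at K4
  have E1 : p*p + q*r = 0 := by linear_combination K1 + (p*p + q*r) * h3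
  have E2 : t*t - r*v = 0 := by linear_combination -K2 + (t*t - r*v) * h3
  have E3 : p*r + q*t = 0 := by linear_combination K3a + (p*r + q*t) * h3
  have E4 : p*t + q*v = 0 := by linear_combination -K3b + (p*t - r*r) * h3
  have E5 : p*v - r*t = 0 := by linear_combination K4 + (p*v - r*t) * h3
  clear K1 K2 K3a K3b K4
  by_cases hr : r = 0
  · have hp0 : p = 0 := mul_self_eq_zero.mp (by linear_combination E1 - q * hr)
    have ht0 : t = 0 := mul_self_eq_zero.mp (by linear_combination E2 + v * hr)
    have hqv : q * v = 0 := by linear_combination E4 - t * hp0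
    rcases mul_eq_zero.mp hqv with hq0 | hv0
    · -- q = 0 : use basis (b, -a), α = -v
      left
      refine ⟨b, -a, -v, ?_, by rw [map_neg, hba]; ring, ?_, ?_, ?_, ?_, ?_, ?_, ?_, ?_⟩
      · rw [eq_top_iff, ← hspan, Submodule.span_le]
        rintro u hu
        simp only [Set.mem_insert_iff, Set.mem_singleton_iff] at hu
        rcases hu with h | h
        · rw [h]
          have h1 : -a ∈ Submodule.span k {b, -a} := Submodule.subset_span (by simp)
          have h2 := Submodule.neg_mem _ h1
          rwa [neg_neg] at h2
        · rw [h]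
          exact Submodule.subset_span (by simp)
      · rw [Pbbb, ht0]; module
      · simp only [map_neg, LinearMap.neg_apply, Pbba, ht0, hr]; module
      · simp only [map_neg, LinearMap.neg_apply, Pbab, ht0, hr]; module
      · simp only [map_neg, LinearMap.neg_apply, Pabb, ht0, hr]; module
      · simp only [map_neg, LinearMap.neg_apply, Pbaa, hp0, hr]; module
      · simp only [map_neg, LinearMap.neg_apply, Paba, hp0, hr]; module
      · simp only [map_neg, LinearMap.neg_apply, Paab, hp0, hr]; module
      · simp only [map_neg, LinearMap.neg_apply, Paaa, hp0, hq0]; module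
    · -- v = 0 : use basis (a, b), α = q
      left
      refine ⟨a, b, q, hspan, hab, by rw [Paaa, hp0]; module,
        by rw [Paab, hr, hp0]; module, by rw [Paba, hr, hp0]; module,
        by rw [Pbaa, hr, hp0]; module, by rw [Pabb, ht0, hr]; module,
        by rw [Pbab, ht0, hr]; module, by rw [Pbba, ht0, hr]; module,
        by rw [Pbbb, hv0, ht0]; module⟩
  · by_cases hp : p = 0
    · -- p = 0, r ≠ 0 : case (ii) with ε = r
      have hq0 : q = 0 := by
        have h : q * r = 0 := by linear_combination E1 - p * hp
        exact (mul_eq_zero.mp h).resolve_right hr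
      have ht0 : t = 0 := by
        have h : r * t = 0 := by linear_combination -E5 + v * hp
        exact (mul_eq_zero.mp h).resolve_left hr
      have hv0 : v = 0 := by
        have h : r * v = 0 := by linear_combination -E2 + t * ht0
        exact (mul_eq_zero.mp h).resolve_left hr
      right
      refine ⟨a, b, r, hspan, hab, hr, by rw [Paaa, hp, hq0]; module,
        by rw [Pbbb, hv0, ht0]; module, by rw [Paab, hp]; module,
        by rw [Paba, hp]; module, by rw [Pbaa, hp]; module,
        by rw [Pabb, ht0]; module, by rw [Pbab, ht0]; module,
        by rw [Pbba, ht0]; module⟩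
    · -- p ≠ 0, r ≠ 0 : case (i) with basis (a, b - (r/p) • a), α = q
      have hpt : t * p = r * r := by
        have h : p * (t * p - r * r) = 0 := by linear_combination t * E1 - r * E3
        have := (mul_eq_zero.mp h).resolve_left hp
        exact sub_eq_zero.mp this
      have hv2 : v * r = t * t := by linear_combination -E2
      left
      refine ⟨a, b - (r/p) • a, q, ?_, ?_, ?_, ?_, ?_, ?_, ?_, ?_, ?_, ?_⟩
      · rw [eq_top_iff, ← hspan, Submodule.span_le]
        rintro u hu
        simp only [Set.mem_insert_iff, Set.mem_singleton_iff] at hu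
        rcases hu with h | h
        · rw [h]
          exact Submodule.subset_span (by simp)
        · rw [h]
          have h1 : b - (r/p) • a ∈ Submodule.span k {a, b - (r/p) • a} :=
            Submodule.subset_span (by simp)
          have h2 : a ∈ Submodule.span k {a, b - (r/p) • a} :=
            Submodule.subset_span (by simp)
          have h3 := Submodule.add_mem _ h1 (Submodule.smul_mem _ (r/p) h2)
          simpa using h3
      · simp only [map_sub, map_smul, LinearMap.sub_apply, LinearMap.smul_apply, hab, haa,
          smul_eq_mul, mul_zero, sub_zero]
      · simp only [map_sub, map_smul, LinearMap.sub_apply, LinearMap.smul_apply,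
          Paaa, Paab, Paba, Pbaa, Pabb, Pbab, Pbba, Pbbb]
        match_scalars
        all_goals field_simp
        all_goals (first
          | linear_combination E1
          | linear_combination -E1
          | linear_combination hpt
          | linear_combination -r*E1
          | linear_combination p^4*E5 - 2*p^3*r*hpt
          | linear_combination -p^3*hpt - p*r^2*E1
          | linear_combination p^3*hpt + p*r^2*E1
          | linear_combination r*E1 + p^3*hpt + p*r^2*E1
          | linear_combination -p^3*hpt - p*r^2*E1 - r*E1
          | linear_combination -(p^3*hpt) - p*r^2*E1
          | linear_combination r*E1
          | linear_combination p*E5 - 2*r*hpt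
          | linear_combination -p^2*hpt - r^2*E1
          | linear_combination)
      · simp only [map_sub, map_smul, LinearMap.sub_apply, LinearMap.smul_apply,
          Paaa, Paab, Paba, Pbaa, Pabb, Pbab, Pbba, Pbbb]
        match_scalars
        all_goals field_simp
        all_goals (first
          | linear_combination E1
          | linear_combination -E1
          | linear_combination hpt
          | linear_combination -r*E1
          | linear_combination p^4*E5 - 2*p^3*r*hpt
          | linear_combination -p^3*hpt - p*r^2*E1
          | linear_combination p^3*hpt + p*r^2*E1
          | linear_combination r*E1 + p^3*hpt + p*r^2*E1
          | linear_combination -p^3*hpt - p*r^2*E1 - r*E1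
          | linear_combination -(p^3*hpt) - p*r^2*E1
          | linear_combination r*E1
          | linear_combination p*E5 - 2*r*hpt
          | linear_combination -p^2*hpt - r^2*E1
          | linear_combination)
      · simp only [map_sub, map_smul, LinearMap.sub_apply, LinearMap.smul_apply,
          Paaa, Paab, Paba, Pbaa, Pabb, Pbab, Pbba, Pbbb]
        match_scalars
        all_goals field_simp
        all_goals (first
          | linear_combination E1
          | linear_combination -E1
          | linear_combination hpt
          | linear_combination -r*E1
          | linear_combination p^4*E5 - 2*p^3*r*hpt
          | linear_combination -p^3*hpt - p*r^2*E1
          | linear_combination p^3*hpt + p*r^2*E1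
          | linear_combination r*E1 + p^3*hpt + p*r^2*E1
          | linear_combination -p^3*hpt - p*r^2*E1 - r*E1
          | linear_combination -(p^3*hpt) - p*r^2*E1
          | linear_combination r*E1
          | linear_combination p*E5 - 2*r*hpt
          | linear_combination -p^2*hpt - r^2*E1
          | linear_combination)
      · simp only [map_sub, map_smul, LinearMap.sub_apply, LinearMap.smul_apply,
          Paaa, Paab, Paba, Pbaa, Pabb, Pbab, Pbba, Pbbb]
        match_scalars
        all_goals field_simp
        all_goals (first
          | linear_combination E1
          | linear_combination -E1
          | linear_combination hpt
          | linear_combination -r*E1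
          | linear_combination p^4*E5 - 2*p^3*r*hpt
          | linear_combination -p^3*hpt - p*r^2*E1
          | linear_combination p^3*hpt + p*r^2*E1
          | linear_combination r*E1 + p^3*hpt + p*r^2*E1
          | linear_combination -p^3*hpt - p*r^2*E1 - r*E1
          | linear_combination -(p^3*hpt) - p*r^2*E1
          | linear_combination r*E1
          | linear_combination p*E5 - 2*r*hpt
          | linear_combination -p^2*hpt - r^2*E1
          | linear_combination)
      · simp only [map_sub, map_smul, LinearMap.sub_apply, LinearMap.smul_apply,
          Paaa, Paab, Paba, Pbaa, Pabb, Pbab, Pbba, Pbbb]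
        match_scalars
        all_goals field_simp
        all_goals (first
          | linear_combination E1
          | linear_combination -E1
          | linear_combination hpt
          | linear_combination -r*E1
          | linear_combination p^4*E5 - 2*p^3*r*hpt
          | linear_combination -p^3*hpt - p*r^2*E1
          | linear_combination p^3*hpt + p*r^2*E1
          | linear_combination r*E1 + p^3*hpt + p*r^2*E1
          | linear_combination -p^3*hpt - p*r^2*E1 - r*E1
          | linear_combination -(p^3*hpt) - p*r^2*E1
          | linear_combination r*E1
          | linear_combination p*E5 - 2*r*hpt
          | linear_combination -p^2*hpt - r^2*E1
          | linear_combination)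
      · simp only [map_sub, map_smul, LinearMap.sub_apply, LinearMap.smul_apply,
          Paaa, Paab, Paba, Pbaa, Pabb, Pbab, Pbba, Pbbb]
        match_scalars
        all_goals field_simp
        all_goals (first
          | linear_combination E1
          | linear_combination -E1
          | linear_combination hpt
          | linear_combination -r*E1
          | linear_combination p^4*E5 - 2*p^3*r*hpt
          | linear_combination -p^3*hpt - p*r^2*E1
          | linear_combination p^3*hpt + p*r^2*E1
          | linear_combination r*E1 + p^3*hpt + p*r^2*E1
          | linear_combination -p^3*hpt - p*r^2*E1 - r*E1
          | linear_combination -(p^3*hpt) - p*r^2*E1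
          | linear_combination r*E1
          | linear_combination p*E5 - 2*r*hpt
          | linear_combination -p^2*hpt - r^2*E1
          | linear_combination)
      · simp only [map_sub, map_smul, LinearMap.sub_apply, LinearMap.smul_apply,
          Paaa, Paab, Paba, Pbaa, Pabb, Pbab, Pbba, Pbbb]
        match_scalars
        all_goals field_simp
        all_goals (first
          | linear_combination E1
          | linear_combination -E1
          | linear_combination hpt
          | linear_combination -r*E1
          | linear_combination p^4*E5 - 2*p^3*r*hpt
          | linear_combination -p^3*hpt - p*r^2*E1
          | linear_combination p^3*hpt + p*r^2*E1
          | linear_combination r*E1 + p^3*hpt + p*r^2*E1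
          | linear_combination -p^3*hpt - p*r^2*E1 - r*E1
          | linear_combination -(p^3*hpt) - p*r^2*E1
          | linear_combination r*E1
          | linear_combination p*E5 - 2*r*hpt
          | linear_combination -p^2*hpt - r^2*E1
          | linear_combination)
      · simp only [map_sub, map_smul, LinearMap.sub_apply, LinearMap.smul_apply,
          Paaa, Paab, Paba, Pbaa, Pabb, Pbab, Pbba, Pbbb]
        match_scalars
        all_goals field_simp
        all_goals (first
          | linear_combination E1
          | linear_combination -E1
          | linear_combination hpt
          | linear_combination -r*E1
          | linear_combination p^4*E5 - 2*p^3*r*hpt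
          | linear_combination -p^3*hpt - p*r^2*E1
          | linear_combination p^3*hpt + p*r^2*E1
          | linear_combination r*E1 + p^3*hpt + p*r^2*E1
          | linear_combination -p^3*hpt - p*r^2*E1 - r*E1
          | linear_combination -(p^3*hpt) - p*r^2*E1
          | linear_combination r*E1
          | linear_combination p*E5 - 2*r*hpt
          | linear_combination -p^2*hpt - r^2*E1
          | linear_combination)
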